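/- arXiv:2311.00088 — 4 statements merged into one kernel-verified Lean document; each statement's English description precedes it below -/
import Mathlib

section
/- Let d ≥ 1, let f : ℝ^d → ℝ be L-smooth and satisfy the local PL condition with constants δ_f, μ > 0, let g satisfy the noise model with constant σ∞ > 0, and consider the noisy GD iterates with deterministic initial point θ_1 satisfying f(θ_1) < δ_f and fixed learning rate a satisfying a < min{1/L, 2μδ_f/(L σ∞² d)}. Then the probability of the event that there exists N > 0 with f(θ_N) ≥ δ_f while for every n < N one has f(θ_n) < δ_f and f(θ_n) > L a σ∞² d / μ, is at most f(θ_1)/δ_f. In words: with probability at least 1 − f(θ_1)/δ_f, the noisy GD iterates remain in the sublevel set f^{-1}([0, δ_f)) until they achieve a loss value ≤ L a σ∞² d / μ. -/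
open MeasureTheory ProbabilityTheory

open scoped RealInnerProductSpace

section Aux

lemma descent {E : Type*} [NormedAddCommGroup E] [InnerProductSpace ℝ E]
    [CompleteSpace E]
    (f : E → ℝ) (hf : Differentiable ℝ f) (L : ℝ) (hL : 0 < L)
    (hsmooth : ∀ x y : E, ‖gradient f x - gradient f y‖ ≤ L * ‖x - y‖)
    (x v : E) :
    f (x + v) ≤ f x + ⟪gradient f x, v⟫ + L / 2 * ‖v‖ ^ 2 := by
  set φ : ℝ → ℝ := fun t => f (x + t • v) - t * ⟪gradient f x, v⟫ - L * t ^ 2 / 2 * ‖v‖ ^ 2 with hφ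
  have hline : ∀ t : ℝ, HasDerivAt (fun s : ℝ => x + s • v) v t := by
    intro t
    simpa using ((hasDerivAt_id t).smul_const v).const_add x
  have hd : ∀ t : ℝ, HasDerivAt φ
      (⟪gradient f (x + t • v), v⟫ - ⟪gradient f x, v⟫ - L * t * ‖v‖ ^ 2) t := by
    intro t
    have h1 : HasDerivAt (fun s : ℝ => f (x + s • v)) (⟪gradient f (x + t • v), v⟫) t := by
      have hg := (hf (x + t • v)).hasGradientAt
      rw [hasGradientAt_iff_hasFDerivAt] at hg
      have h2 := hg.comp_hasDerivAt t (hline t)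
      exact h2.congr_deriv (by simp [InnerProductSpace.toDual_apply_apply])
    have h3 : HasDerivAt (fun s : ℝ => s * ⟪gradient f x, v⟫) (⟪gradient f x, v⟫) t := by
      simpa using (hasDerivAt_id t).mul_const _
    have h4 : HasDerivAt (fun s : ℝ => L * s ^ 2 / 2 * ‖v‖ ^ 2) (L * t * ‖v‖ ^ 2) t := by
      have : HasDerivAt (fun s : ℝ => s ^ 2) (2 * t) t := by
        simpa using hasDerivAt_pow 2 t
      have := ((this.const_mul L).div_const 2).mul_const (‖v‖ ^ 2)
      exact this.congr_deriv (by ring)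
    exact (h1.sub h3).sub h4
  have key : φ 1 ≤ φ 0 := by
    have hmono : AntitoneOn φ (Set.Icc 0 1) := by
      apply antitoneOn_of_deriv_nonpos (convex_Icc 0 1)
      · exact Continuous.continuousOn (continuous_iff_continuousAt.2 fun t => (hd t).continuousAt)
      · intro t ht
        exact (hd t).differentiableAt.differentiableWithinAt
      · intro t ht
        rw [interior_Icc] at ht
        rw [(hd t).deriv]
        have hcs : ⟪gradient f (x + t • v) - gradient f x, v⟫ ≤ L * t * ‖v‖ * ‖v‖ := by
          calc ⟪gradient f (x + t • v) - gradient f x, v⟫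
              ≤ ‖gradient f (x + t • v) - gradient f x‖ * ‖v‖ := real_inner_le_norm _ _
            _ ≤ (L * ‖(x + t • v) - x‖) * ‖v‖ := by
                gcongr; exact hsmooth _ _
            _ = L * t * ‖v‖ * ‖v‖ := by
                rw [add_sub_cancel_left, norm_smul, Real.norm_eq_abs, abs_of_pos ht.1]
                ring
        rw [inner_sub_left] at hcs
        nlinarith [sq_nonneg ‖v‖]
    have := hmono (Set.mem_Icc.2 ⟨le_refl 0, zero_le_one⟩) (Set.mem_Icc.2 ⟨zero_le_one, le_refl 1⟩) zero_le_one
    exact this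
  simp only [hφ] at key
  norm_num at key
  have hgx : ⟪gradient f x, v⟫ = fderiv ℝ f x v := by simp [gradient]
  linarith

lemma step_bound
    (d : ℕ) (hd : 1 ≤ d)
    (f : EuclideanSpace ℝ (Fin d) → ℝ) (hf : Differentiable ℝ f)
    (L : ℝ) (hL : 0 < L)
    (hsmooth : ∀ x y : EuclideanSpace ℝ (Fin d),
      ‖gradient f x - gradient f y‖ ≤ L * ‖x - y‖)
    (hfnonneg : ∀ x, 0 ≤ f x)
    (δf μ : ℝ) (hδf : 0 < δf) (hμ : 0 < μ)
    (hPL : ∀ x, f x < δf → 2 * μ * f x ≤ ‖gradient f x‖ ^ 2)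
    (Ω : Type*) [MeasurableSpace Ω] (P : Measure Ω) [IsProbabilityMeasure P]
    (g : EuclideanSpace ℝ (Fin d) → Ω → EuclideanSpace ℝ (Fin d))
    (σ : ℝ) (hσ : 0 < σ)
    (hgint : ∀ x, Integrable (g x) P)
    (hunbiased : ∀ x, ∫ ω, g x ω ∂P = gradient f x)
    (hvarint : ∀ x i, Integrable (fun ω => |g x ω i - gradient f x i| ^ 2) P)
    (hvar : ∀ x i, ∫ ω, |g x ω i - gradient f x i| ^ 2 ∂P ≤ σ ^ 2)
    (a : ℝ) (ha0 : 0 < a) (haL : a * L ≤ 1)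
    (x : EuclideanSpace ℝ (Fin d)) (hx1 : f x < δf) (hx2 : L * a * σ ^ 2 * d / μ < f x) :
    ∫⁻ ω, ENNReal.ofReal (f (x - a • g x ω)) ∂P ≤ ENNReal.ofReal (f x) := by
  set c : EuclideanSpace ℝ (Fin d) := gradient f x with hc
  set G : Ω → EuclideanSpace ℝ (Fin d) := g x with hG
  have hGint : Integrable G P := hgint x
  -- coordinate integrability
  have hGi_int : ∀ i, Integrable (fun ω => G ω i) P := by
    intro i
    have := (EuclideanSpace.proj i : EuclideanSpace ℝ (Fin d) →L[ℝ] ℝ).integrable_comp hGint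
    simpa using this
  have hdev_int : ∀ i, Integrable (fun ω => (G ω i - c i) ^ 2) P := by
    intro i
    have := hvarint x i
    simpa [sq_abs] using this
  -- ∫ G_i = c_i
  have hGi_mean : ∀ i, ∫ ω, G ω i ∂P = c i := by
    intro i
    have := (EuclideanSpace.proj i : EuclideanSpace ℝ (Fin d) →L[ℝ] ℝ).integral_comp_comm hGint
    simpa [hunbiased x, hG] using this
  -- ∫ G_i^2 ≤ σ² + c_i²
  have hGi_sq_int : ∀ i, Integrable (fun ω => G ω i ^ 2) P := by
    intro i
    have h1 : ∀ ω, G ω i ^ 2 = (G ω i - c i) ^ 2 + (2 * c i) * (G ω i) - c i ^ 2 := by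
      intro ω; ring
    simp_rw [h1]
    exact (((hdev_int i).add ((hGi_int i).const_mul (2 * c i))).sub (integrable_const _))
  have hGi_sq : ∀ i, ∫ ω, G ω i ^ 2 ∂P ≤ σ ^ 2 + c i ^ 2 := by
    intro i
    have h1 : ∀ ω, G ω i ^ 2 = (G ω i - c i) ^ 2 + ((2 * c i) * (G ω i) - c i ^ 2) := by
      intro ω; ring
    calc ∫ ω, G ω i ^ 2 ∂P
        = ∫ ω, ((G ω i - c i) ^ 2 + ((2 * c i) * (G ω i) - c i ^ 2)) ∂P := by
          simp_rw [← h1]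
      _ = (∫ ω, (G ω i - c i) ^ 2 ∂P) + ∫ ω, ((2 * c i) * (G ω i) - c i ^ 2) ∂P := by
          exact integral_add (hdev_int i) (((hGi_int i).const_mul _).sub (integrable_const _))
      _ ≤ σ ^ 2 + c i ^ 2 := by
          have h2 : ∫ ω, ((2 * c i) * (G ω i) - c i ^ 2) ∂P = c i ^ 2 := by
            rw [integral_sub ((hGi_int i).const_mul _) (integrable_const _)]
            have : ∫ ω, (2 * c i) * (G ω i) ∂P = (2 * c i) * c i := by
              rw [integral_const_mul, hGi_mean i]
            rw [this]
            simp [measure_univ]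
            ring
          have h3 := hvar x i
          simp_rw [sq_abs] at h3
          linarith
  -- norm squared
  have hnormsq : ∀ v : EuclideanSpace ℝ (Fin d), ‖v‖ ^ 2 = ∑ i, v i ^ 2 := by
    intro v
    rw [EuclideanSpace.norm_eq, Real.sq_sqrt (by positivity)]
    simp [sq_abs]
  have hGsq_int : Integrable (fun ω => ‖G ω‖ ^ 2) P := by
    simp_rw [hnormsq]
    exact integrable_finset_sum _ (fun i _ => hGi_sq_int i)
  have hGsq : ∫ ω, ‖G ω‖ ^ 2 ∂P ≤ d * σ ^ 2 + ‖c‖ ^ 2 := by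
    have hfe : (fun ω => ‖G ω‖ ^ 2) = fun ω => ∑ i, G ω i ^ 2 := funext fun ω => hnormsq _
    rw [hfe, integral_finset_sum _ (fun i _ => hGi_sq_int i)]
    calc (∑ i, ∫ ω, G ω i ^ 2 ∂P) ≤ ∑ i : Fin d, (σ ^ 2 + c i ^ 2) :=
        Finset.sum_le_sum (fun i _ => hGi_sq i)
      _ = d * σ ^ 2 + ‖c‖ ^ 2 := by
          rw [Finset.sum_add_distrib, Finset.sum_const, Finset.card_univ,
            Fintype.card_fin, nsmul_eq_mul, hnormsq c]
  -- inner product integral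
  have hinner_int : Integrable (fun ω => ⟪c, G ω⟫) P :=
    ((innerSL ℝ c).integrable_comp hGint)
  have hinner : ∫ ω, ⟪c, G ω⟫ ∂P = ‖c‖ ^ 2 := by
    have := (innerSL ℝ c).integral_comp_comm hGint
    simp only [innerSL_apply_apply] at this
    rw [this, hunbiased x, ← hc, real_inner_self_eq_norm_sq]
  -- pointwise descent bound
  have hptw : ∀ ω, f (x - a • G ω) ≤ f x - a * ⟪c, G ω⟫ + L / 2 * a ^ 2 * ‖G ω‖ ^ 2 := by
    intro ω
    have := descent f hf L hL hsmooth x (-(a • G ω))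
    rw [← sub_eq_add_neg] at this
    calc f (x - a • G ω) ≤ f x + ⟪c, -(a • G ω)⟫ + L / 2 * ‖-(a • G ω)‖ ^ 2 := this
      _ = f x - a * ⟪c, G ω⟫ + L / 2 * a ^ 2 * ‖G ω‖ ^ 2 := by
          rw [inner_neg_right, real_inner_smul_right, norm_neg, norm_smul,
            Real.norm_eq_abs, abs_of_pos ha0, mul_pow]
          ring
  -- the dominating function is integrable
  have hdom_int : Integrable (fun ω => f x - a * ⟪c, G ω⟫ + L / 2 * a ^ 2 * ‖G ω‖ ^ 2) P :=
    ((integrable_const _).sub (hinner_int.const_mul a)).add (hGsq_int.const_mul _)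
  -- f(x - a G) is integrable
  have hmeasG : AEStronglyMeasurable G P := hGint.1
  have hfmeas : AEStronglyMeasurable (fun ω => f (x - a • G ω)) P := by
    apply (hf.continuous.comp_aestronglyMeasurable)
    exact (aestronglyMeasurable_const.sub (hmeasG.const_smul a))
  have hfint : Integrable (fun ω => f (x - a • G ω)) P := by
    apply Integrable.mono' hdom_int hfmeas
    filter_upwards with ω
    rw [Real.norm_eq_abs, abs_of_nonneg (hfnonneg _)]
    exact hptw ω
  -- compute
  rw [← ofReal_integral_eq_lintegral_ofReal hfint
    (Filter.Eventually.of_forall (fun ω => hfnonneg _))]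
  apply ENNReal.ofReal_le_ofReal
  calc ∫ ω, f (x - a • G ω) ∂P
      ≤ ∫ ω, (f x - a * ⟪c, G ω⟫ + L / 2 * a ^ 2 * ‖G ω‖ ^ 2) ∂P :=
        integral_mono hfint hdom_int hptw
    _ = f x - a * ‖c‖ ^ 2 + L / 2 * a ^ 2 * ∫ ω, ‖G ω‖ ^ 2 ∂P := by
        have i2 : Integrable (fun ω => a * ⟪c, G ω⟫) P := hinner_int.const_mul a
        have i3 : Integrable (fun ω => L / 2 * a ^ 2 * ‖G ω‖ ^ 2) P := hGsq_int.const_mul _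
        have i12 : Integrable (fun ω => f x - a * ⟪c, G ω⟫) P :=
          (integrable_const (f x)).sub i2
        rw [integral_add i12 i3, integral_sub (integrable_const (f x)) i2]
        have e1 : ∫ ω, a * ⟪c, G ω⟫ ∂P = a * ‖c‖ ^ 2 := by rw [integral_const_mul, hinner]
        have e2 : ∫ ω, L / 2 * a ^ 2 * ‖G ω‖ ^ 2 ∂P = L / 2 * a ^ 2 * ∫ ω, ‖G ω‖ ^ 2 ∂P := by
          rw [integral_const_mul]
        rw [e1, e2]
        simp [measure_univ]
    _ ≤ f x - a * ‖c‖ ^ 2 + L / 2 * a ^ 2 * (d * σ ^ 2 + ‖c‖ ^ 2) := by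
        have : (0:ℝ) < L / 2 * a ^ 2 := by positivity
        nlinarith [hGsq]
    _ ≤ f x := by
        have hpl := hPL x hx1
        have hfx : L * a * σ ^ 2 * d / μ < f x := hx2
        have h1 : L * a * σ ^ 2 * d < μ * f x := by
          rw [div_lt_iff₀ hμ] at hfx
          linarith [hfx]
        have h2 : a * L ≤ 1 := haL
        nlinarith [sq_nonneg ‖c‖, hfnonneg x, sq_nonneg σ, mul_pos ha0 hμ,
          sq_nonneg (a * ‖c‖), hd]

noncomputable def Phi {E Ω : Type*} [AddCommGroup E] [Module ℝ E]
    (g : E → Ω → E) (θ1 : E) (a : ℝ) : (n : ℕ) → (Fin n → Ω) → E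
  | 0 => fun _ => θ1
  | (n+1) =>
    if 1 ≤ n then
      fun x =>
        Phi g θ1 a n (fun i => x i.castSucc) -
          a • g (Phi g θ1 a n (fun i => x i.castSucc)) (x (Fin.last n))
    else fun _ => θ1

lemma Phi_meas {E Ω : Type*} [NormedAddCommGroup E] [NormedSpace ℝ E]
    [MeasurableSpace E] [BorelSpace E] [SecondCountableTopology E]
    [MeasurableSpace Ω]
    (g : E → Ω → E) (hg : Measurable (Function.uncurry g)) (θ1 : E) (a : ℝ) :
    ∀ n, Measurable (Phi g θ1 a n) := by
  intro n
  induction n with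
  | zero => exact measurable_const
  | succ n ih =>
    rw [Phi]
    split
    · have h1 : Measurable (fun x : Fin (n+1) → Ω => Phi g θ1 a n (fun i => x i.castSucc)) :=
        ih.comp (measurable_pi_lambda _ (fun i => measurable_pi_apply _))
      have h2 : Measurable (fun x : Fin (n+1) → Ω =>
          g (Phi g θ1 a n (fun i => x i.castSucc)) (x (Fin.last n))) := by
        have : Measurable (fun x : Fin (n+1) → Ω =>
            ((Phi g θ1 a n (fun i => x i.castSucc)), x (Fin.last n))) :=
          h1.prodMk (measurable_pi_apply _)
        exact hg.comp this
      exact h1.sub (h2.const_smul a)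
    · exact measurable_const

lemma Phi_rep {E Ω Ω' : Type*} [NormedAddCommGroup E] [NormedSpace ℝ E]
    (g : E → Ω → E) (θ1 : E) (a : ℝ)
    (ξ : ℕ → Ω' → Ω) (θ : ℕ → Ω' → E)
    (hθinit : ∀ ω, θ 1 ω = θ1)
    (hθrec : ∀ n, 1 ≤ n → ∀ ω, θ (n + 1) ω = θ n ω - a • g (θ n ω) (ξ n ω)) :
    ∀ n, 1 ≤ n → ∀ ω, θ n ω = Phi g θ1 a n (fun i : Fin n => ξ i ω) := by
  intro n
  induction n with
  | zero => omega
  | succ n ih =>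
    intro _ ω
    by_cases hn : 1 ≤ n
    · rw [hθrec n hn ω, ih hn ω, Phi, if_pos hn]
      simp [Fin.coe_castSucc, Fin.val_last]
    · interval_cases n
      rw [hθinit ω, Phi, if_neg (by omega)]

end Aux


/-- stochastic stability of noisy gradient descent, Lemma 3.1.
Let `f : ℝ^d → ℝ` be `L`-smooth, satisfy the local PL condition with constants `δf, μ > 0`
(global minimum value normalized to `0`), and let `g` be an unbiased gradient estimate with
componentwise noise second moment at most `σ²`.  For the noisy GD iterates
`θ_{n+1} = θ_n - a g(θ_n, ξ_n)` with i.i.d. noise `ξ_n`, deterministic initial point `θ₁`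
with `f(θ₁) < δf`, and learning rate `a < min{1/L, 2μδf/(Lσ²d)}`, the probability that
the iterates leave the sublevel set `f⁻¹([0,δf))` before reaching a loss `≤ Laσ²d/μ`
is at most `f(θ₁)/δf`. -/
theorem stmt0
    (d : ℕ) (hd : 1 ≤ d)
    (f : EuclideanSpace ℝ (Fin d) → ℝ) (hf : Differentiable ℝ f)
    (L : ℝ) (hL : 0 < L)
    (hsmooth : ∀ x y : EuclideanSpace ℝ (Fin d),
      ‖gradient f x - gradient f y‖ ≤ L * ‖x - y‖)
    (hfnonneg : ∀ x, 0 ≤ f x) (hfmin : ∃ x, f x = 0)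
    (δf μ : ℝ) (hδf : 0 < δf) (hμ : 0 < μ)
    (hPL : ∀ x, f x < δf → 2 * μ * f x ≤ ‖gradient f x‖ ^ 2)
    (Ω : Type*) [MeasurableSpace Ω] (P : Measure Ω) [IsProbabilityMeasure P]
    (g : EuclideanSpace ℝ (Fin d) → Ω → EuclideanSpace ℝ (Fin d))
    (hgmeas : Measurable (Function.uncurry g))
    (σ : ℝ) (hσ : 0 < σ)
    (hgint : ∀ x, Integrable (g x) P)
    (hunbiased : ∀ x, ∫ ω, g x ω ∂P = gradient f x)
    (hvarint : ∀ x i, Integrable (fun ω => |g x ω i - gradient f x i| ^ 2) P)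
    (hvar : ∀ x i, ∫ ω, |g x ω i - gradient f x i| ^ 2 ∂P ≤ σ ^ 2)
    (Ω' : Type*) [MeasurableSpace Ω'] (P' : Measure Ω') [IsProbabilityMeasure P']
    (ξ : ℕ → Ω' → Ω) (hξmeas : ∀ n, Measurable (ξ n))
    (hiid : iIndepFun ξ P')
    (hlaw : ∀ n, P'.map (ξ n) = P)
    (θ1 : EuclideanSpace ℝ (Fin d)) (hθ1 : f θ1 < δf)
    (a : ℝ) (ha0 : 0 < a)
    (ha : a < min (1 / L) (2 * μ * δf / (L * σ ^ 2 * d)))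
    (θ : ℕ → Ω' → EuclideanSpace ℝ (Fin d))
    (hθinit : ∀ ω, θ 1 ω = θ1)
    (hθrec : ∀ n, 1 ≤ n → ∀ ω, θ (n + 1) ω = θ n ω - a • g (θ n ω) (ξ n ω)) :
    P' {ω | ∃ N, 1 ≤ N ∧ δf ≤ f (θ N ω) ∧
          ∀ n, 1 ≤ n → n < N →
            f (θ n ω) < δf ∧ L * a * σ ^ 2 * d / μ < f (θ n ω)}
      ≤ ENNReal.ofReal (f θ1 / δf) := by
  have haL : a * L ≤ 1 := by
    have h1 : a < 1 / L := lt_of_lt_of_le ha (min_le_left _ _)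
    rw [lt_div_iff₀ hL] at h1
    linarith
  set cst : ℝ := L * a * σ ^ 2 * d / μ with hcst
  -- representation of iterates
  have hrep : ∀ n, 1 ≤ n → ∀ ω, θ n ω = Phi g θ1 a n (fun i : Fin n => ξ i ω) :=
    Phi_rep g θ1 a ξ θ hθinit hθrec
  have hθmeas : ∀ n, 1 ≤ n → Measurable (θ n) := by
    intro n hn
    have he : θ n = fun ω => Phi g θ1 a n (fun i : Fin n => ξ i ω) := funext (hrep n hn)
    rw [he]
    exact (Phi_meas g hgmeas θ1 a n).comp
      (measurable_pi_lambda _ (fun i => hξmeas i))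
  have hfmeas : Measurable f := hf.continuous.measurable
  -- the "alive" events and the exit events
  set B : ℕ → Set Ω' := fun n =>
    {ω | ∀ k, 1 ≤ k → k ≤ n → f (θ k ω) < δf ∧ cst < f (θ k ω)} with hB
  set Ev : ℕ → Set Ω' := fun N =>
    {ω | 1 ≤ N ∧ δf ≤ f (θ N ω) ∧
      ∀ n, 1 ≤ n → n < N → f (θ n ω) < δf ∧ cst < f (θ n ω)} with hEv
  have hBmeas : ∀ n, MeasurableSet (B n) := by
    intro n
    have : B n = ⋂ (k : ℕ) (_ : 1 ≤ k) (_ : k ≤ n),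
        {ω | f (θ k ω) < δf ∧ cst < f (θ k ω)} := by
      ext ω; simp [hB, Set.mem_iInter]
    rw [this]
    refine MeasurableSet.iInter (fun k => ?_)
    refine MeasurableSet.iInter (fun hk => ?_)
    refine MeasurableSet.iInter (fun _ => ?_)
    exact ((measurableSet_lt (hfmeas.comp (hθmeas k hk)) measurable_const)).inter
      (measurableSet_lt measurable_const (hfmeas.comp (hθmeas k hk)))
  have hEvmeas : ∀ N, MeasurableSet (Ev N) := by
    intro N
    rcases Nat.eq_zero_or_pos N with h | h
    · have : Ev N = ∅ := by
        ext ω; simp [hEv, h]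
      rw [this]; exact MeasurableSet.empty
    · have : Ev N = {ω | δf ≤ f (θ N ω)} ∩
          ⋂ (k : ℕ) (_ : 1 ≤ k) (_ : k < N), {ω | f (θ k ω) < δf ∧ cst < f (θ k ω)} := by
        ext ω; simp [hEv, Set.mem_iInter, h]
        tauto
      rw [this]
      refine ((measurableSet_le measurable_const (hfmeas.comp (hθmeas N h)))).inter ?_
      refine MeasurableSet.iInter (fun k => ?_)
      refine MeasurableSet.iInter (fun hk => ?_)
      refine MeasurableSet.iInter (fun _ => ?_)
      exact ((measurableSet_lt (hfmeas.comp (hθmeas k hk)) measurable_const)).inter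
        (measurableSet_lt measurable_const (hfmeas.comp (hθmeas k hk)))
  -- basic structure facts
  have hEvB : ∀ n, 1 ≤ n → Ev (n+1) ⊆ B n := by
    intro n hn ω hω
    intro k hk hkn
    exact hω.2.2 k hk (by omega)
  have hBsucc : ∀ n, B (n+1) ⊆ B n := by
    intro n ω hω k hk hkn
    exact hω k hk (by omega)
  -- the key supermartingale-type quantity
  set K : ℕ → ENNReal := fun n =>
    ∫⁻ ω, Set.indicator (B n) (fun ω => ENNReal.ofReal (f (θ n ω))) ω ∂P' with hK
  -- Claim (i): splitting off the exit event
  have claim1 : ∀ n, 1 ≤ n →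
      ENNReal.ofReal δf * P' (Ev (n+1)) + K (n+1)
        ≤ ∫⁻ ω, Set.indicator (B n) (fun ω => ENNReal.ofReal (f (θ (n+1) ω))) ω ∂P' := by
    intro n hn
    have ptw : ∀ ω,
        Set.indicator (Ev (n+1)) (fun _ => ENNReal.ofReal δf) ω
          + Set.indicator (B (n+1)) (fun ω => ENNReal.ofReal (f (θ (n+1) ω))) ω
        ≤ Set.indicator (B n) (fun ω => ENNReal.ofReal (f (θ (n+1) ω))) ω := by
      intro ω
      by_cases h1 : ω ∈ Ev (n+1)
      · have h2 : ω ∉ B (n+1) := by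
          intro h2
          have := (h2 (n+1) (by omega) le_rfl).1
          have := h1.2.1
          linarith
        have h3 : ω ∈ B n := hEvB n hn h1
        rw [Set.indicator_of_mem h1, Set.indicator_of_notMem h2,
          Set.indicator_of_mem h3, add_zero]
        exact ENNReal.ofReal_le_ofReal h1.2.1
      · rw [Set.indicator_of_notMem h1, zero_add]
        by_cases h2 : ω ∈ B (n+1)
        · rw [Set.indicator_of_mem h2, Set.indicator_of_mem (hBsucc n h2)]
        · rw [Set.indicator_of_notMem h2]
          exact zero_le
    calc ENNReal.ofReal δf * P' (Ev (n+1)) + K (n+1)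
        = ∫⁻ ω, Set.indicator (Ev (n+1)) (fun _ => ENNReal.ofReal δf) ω ∂P' + K (n+1) := by
          rw [lintegral_indicator_const (hEvmeas (n+1))]
      _ = ∫⁻ ω, (Set.indicator (Ev (n+1)) (fun _ => ENNReal.ofReal δf) ω
            + Set.indicator (B (n+1)) (fun ω => ENNReal.ofReal (f (θ (n+1) ω))) ω) ∂P' := by
          rw [hK]
          rw [← lintegral_add_left (measurable_const.indicator (hEvmeas (n+1)))]
      _ ≤ ∫⁻ ω, Set.indicator (B n) (fun ω => ENNReal.ofReal (f (θ (n+1) ω))) ω ∂P' :=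
          lintegral_mono ptw
  -- Claim (ii): one-step expected descent
  have claim2 : ∀ n, 1 ≤ n →
      (∫⁻ ω, Set.indicator (B n) (fun ω => ENNReal.ofReal (f (θ (n+1) ω))) ω ∂P') ≤ K n := by
    intro n hn
    set X : Ω' → (Fin n → Ω) := fun ω i => ξ i ω with hX
    set Y : Ω' → Ω := ξ n with hY
    have hXmeas : Measurable X := measurable_pi_lambda _ (fun i => hξmeas i)
    have hindep : IndepFun X Y P' := by
      have hdisj : Disjoint (Finset.range n) ({n} : Finset ℕ) := by
        simp [Finset.disjoint_left]
        omega
      have h := hiid.indepFun_finset (Finset.range n) {n} hdisj hξmeas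
      have hφ : Measurable (fun (y : (i : (Finset.range n : Finset ℕ)) → Ω) =>
          (fun i : Fin n => y ⟨(i : ℕ), Finset.mem_range.mpr i.2⟩)) :=
        measurable_pi_lambda _ (fun i => measurable_pi_apply _)
      have hψ : Measurable (fun (y : (i : ({n} : Finset ℕ)) → Ω) =>
          y ⟨n, Finset.mem_singleton_self n⟩) := measurable_pi_apply _
      exact h.comp hφ hψ
    have hmap : P'.map (fun ω => (X ω, Y ω)) = (P'.map X).prod P := by
      have h := (indepFun_iff_map_prod_eq_prod_map_map hXmeas.aemeasurable
        (hξmeas n).aemeasurable).mp hindep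
      rw [hlaw n] at h
      exact h
    haveI : IsProbabilityMeasure (P'.map X) := Measure.isProbabilityMeasure_map hXmeas.aemeasurable
    set C : Set (Fin n → Ω) := {x | ∀ k : Fin (n+1), 1 ≤ (k : ℕ) →
      (f (Phi g θ1 a (k : ℕ) (fun i : Fin (k : ℕ) => x (Fin.castLE k.is_le i))) < δf ∧
        cst < f (Phi g θ1 a (k : ℕ) (fun i : Fin (k : ℕ) => x (Fin.castLE k.is_le i))))} with hC
    have hCmeas : MeasurableSet C := by
      have : C = ⋂ (k : Fin (n+1)) (_ : 1 ≤ (k : ℕ)),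
          {x : Fin n → Ω | f (Phi g θ1 a (k : ℕ) (fun i : Fin (k : ℕ) => x (Fin.castLE k.is_le i))) < δf ∧
            cst < f (Phi g θ1 a (k : ℕ) (fun i : Fin (k : ℕ) => x (Fin.castLE k.is_le i)))} := by
        ext x; simp [hC, Set.mem_iInter]
      rw [this]
      refine MeasurableSet.iInter (fun k => ?_)
      refine MeasurableSet.iInter (fun hk => ?_)
      have hm : Measurable (fun x : Fin n → Ω =>
          f (Phi g θ1 a (k : ℕ) (fun i : Fin (k : ℕ) => x (Fin.castLE k.is_le i)))) :=
        hfmeas.comp ((Phi_meas g hgmeas θ1 a (k : ℕ)).comp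
          (measurable_pi_lambda _ (fun i => measurable_pi_apply _)))
      exact (measurableSet_lt hm measurable_const).inter
        (measurableSet_lt measurable_const hm)
    have hXC : ∀ ω, ω ∈ B n ↔ X ω ∈ C := by
      intro ω
      constructor
      · intro h k hk
        have h2 := h (k : ℕ) hk (Nat.lt_succ_iff.mp k.2)
        rw [hrep (k : ℕ) hk ω] at h2
        exact h2
      · intro h k hk hkn
        have h2 := h ⟨k, by omega⟩ hk
        rw [hrep k hk ω]
        exact h2
    have hθn1rep : ∀ ω, θ (n+1) ω
        = Phi g θ1 a n (X ω) - a • g (Phi g θ1 a n (X ω)) (Y ω) := by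
      intro ω
      rw [hθrec n hn ω, hrep n hn ω]
    set F : (Fin n → Ω) × Ω → ENNReal := fun p =>
      ENNReal.ofReal (f (Phi g θ1 a n p.1 - a • g (Phi g θ1 a n p.1) p.2)) with hF
    set H : (Fin n → Ω) × Ω → ENNReal := (C ×ˢ (Set.univ : Set Ω)).indicator F with hH
    have hFmeas : Measurable F := by
      have h1 : Measurable fun p : (Fin n → Ω) × Ω => Phi g θ1 a n p.1 :=
        (Phi_meas g hgmeas θ1 a n).comp measurable_fst
      have h2 : Measurable fun p : (Fin n → Ω) × Ω => g (Phi g θ1 a n p.1) p.2 :=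
        hgmeas.comp (h1.prodMk measurable_snd)
      exact ENNReal.measurable_ofReal.comp (hfmeas.comp (h1.sub (h2.const_smul a)))
    have hHmeas : Measurable H := hFmeas.indicator (hCmeas.prod MeasurableSet.univ)
    have step1 : ∫⁻ ω, Set.indicator (B n) (fun ω => ENNReal.ofReal (f (θ (n+1) ω))) ω ∂P'
        = ∫⁻ ω, H (X ω, Y ω) ∂P' := by
      refine lintegral_congr (fun ω => ?_)
      by_cases hω : ω ∈ B n
      · rw [Set.indicator_of_mem hω, hH,
          Set.indicator_of_mem (Set.mem_prod.mpr ⟨(hXC ω).mp hω, Set.mem_univ _⟩), hF]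
        rw [hθn1rep ω]
      · rw [Set.indicator_of_notMem hω, hH, Set.indicator_of_notMem]
        intro hc
        exact hω ((hXC ω).mpr (Set.mem_prod.mp hc).1)
    have step2 : ∫⁻ ω, H (X ω, Y ω) ∂P' = ∫⁻ p, H p ∂((P'.map X).prod P) := by
      rw [← hmap, lintegral_map hHmeas (hXmeas.prodMk (hξmeas n))]
    have step3 : ∫⁻ p, H p ∂((P'.map X).prod P)
        = ∫⁻ x, ∫⁻ y, H (x, y) ∂P ∂(P'.map X) := lintegral_prod H hHmeas.aemeasurable
    have step4 : ∀ x, (∫⁻ y, H (x, y) ∂P)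
        ≤ C.indicator (fun x => ENNReal.ofReal (f (Phi g θ1 a n x))) x := by
      intro x
      by_cases hx : x ∈ C
      · rw [Set.indicator_of_mem hx]
        have hx2 : f (Phi g θ1 a n x) < δf ∧ cst < f (Phi g θ1 a n x) :=
          hx ⟨n, by omega⟩ hn
        have heq : ∀ y, H (x, y)
            = ENNReal.ofReal (f (Phi g θ1 a n x - a • g (Phi g θ1 a n x) y)) := by
          intro y
          rw [hH, Set.indicator_of_mem (Set.mem_prod.mpr ⟨hx, Set.mem_univ _⟩), hF]
        calc ∫⁻ y, H (x, y) ∂P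
            = ∫⁻ y, ENNReal.ofReal (f (Phi g θ1 a n x - a • g (Phi g θ1 a n x) y)) ∂P :=
              lintegral_congr heq
          _ ≤ ENNReal.ofReal (f (Phi g θ1 a n x)) :=
              step_bound d hd f hf L hL hsmooth hfnonneg δf μ hδf hμ hPL Ω P g σ hσ
                hgint hunbiased hvarint hvar a ha0 haL (Phi g θ1 a n x) hx2.1 hx2.2
      · rw [Set.indicator_of_notMem hx]
        have heq : ∀ y : Ω, H (x, y) = 0 := by
          intro y
          rw [hH, Set.indicator_of_notMem]
          intro hc
          exact hx (Set.mem_prod.mp hc).1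
        have hz : ∫⁻ y, H (x, y) ∂P = 0 := by
          rw [lintegral_congr heq, lintegral_zero]
        exact le_of_eq hz
    have hIndMeas : Measurable (C.indicator (fun x => ENNReal.ofReal (f (Phi g θ1 a n x)))) :=
      (ENNReal.measurable_ofReal.comp (hfmeas.comp (Phi_meas g hgmeas θ1 a n))).indicator hCmeas
    have step5 : ∫⁻ x, C.indicator (fun x => ENNReal.ofReal (f (Phi g θ1 a n x))) x ∂(P'.map X)
        = K n := by
      rw [lintegral_map hIndMeas hXmeas, hK]
      refine lintegral_congr (fun ω => ?_)
      by_cases hω : ω ∈ B n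
      · rw [Set.indicator_of_mem ((hXC ω).mp hω), Set.indicator_of_mem hω, hrep n hn ω]
      · rw [Set.indicator_of_notMem (fun hc => hω ((hXC ω).mpr hc)),
          Set.indicator_of_notMem hω]
    rw [step1, step2, step3, ← step5]
    exact lintegral_mono step4
  have key : ∀ n, 1 ≤ n → ENNReal.ofReal δf * P' (Ev (n+1)) + K (n+1) ≤ K n :=
    fun n hn => le_trans (claim1 n hn) (claim2 n hn)
  -- telescoping
  have ind : ∀ M : ℕ,
      (∑ j ∈ Finset.range M, ENNReal.ofReal δf * P' (Ev (j+2))) + K (M+1) ≤ K 1 := by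
    intro M
    induction M with
    | zero => simp
    | succ M ihM =>
      rw [Finset.sum_range_succ]
      calc (∑ j ∈ Finset.range M, ENNReal.ofReal δf * P' (Ev (j+2)))
            + ENNReal.ofReal δf * P' (Ev (M+2)) + K (M+1+1)
          = (∑ j ∈ Finset.range M, ENNReal.ofReal δf * P' (Ev (j+2)))
            + (ENNReal.ofReal δf * P' (Ev (M+1+1)) + K (M+1+1)) := by
            rw [add_assoc]
        _ ≤ (∑ j ∈ Finset.range M, ENNReal.ofReal δf * P' (Ev (j+2))) + K (M+1) := by
            gcongr
            exact key (M+1) (by omega)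
        _ ≤ K 1 := ihM
  have hK1 : K 1 ≤ ENNReal.ofReal (f θ1) := by
    calc K 1 ≤ ∫⁻ _, ENNReal.ofReal (f θ1) ∂P' := by
          apply lintegral_mono
          intro ω
          calc Set.indicator (B 1) (fun ω => ENNReal.ofReal (f (θ 1 ω))) ω
              ≤ ENNReal.ofReal (f (θ 1 ω)) := Set.indicator_le_self _ _ ω
            _ = ENNReal.ofReal (f θ1) := by rw [hθinit ω]
      _ = ENNReal.ofReal (f θ1) := by simp
  -- partial sums bounded
  have hsum : ∀ M : ℕ,
      (∑ j ∈ Finset.range M, ENNReal.ofReal δf * P' (Ev (j+2))) ≤ ENNReal.ofReal (f θ1) :=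
    fun M => le_trans (le_trans le_self_add (ind M)) hK1
  have htsum : (∑' N : ℕ, ENNReal.ofReal δf * P' (Ev N)) ≤ ENNReal.ofReal (f θ1) := by
    have h0 : Ev 0 = ∅ := by ext ω; simp [hEv]
    have h1 : Ev 1 = ∅ := by
      ext ω; simp only [hEv, Set.mem_setOf_eq, Set.mem_empty_iff_false, iff_false]
      intro h
      have := h.2.1
      rw [hθinit ω] at this
      linarith
    rw [ENNReal.tsum_eq_iSup_nat]
    refine iSup_le (fun M => ?_)
    calc ∑ N ∈ Finset.range M, ENNReal.ofReal δf * P' (Ev N)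
        ≤ ∑ N ∈ Finset.range (M+2), ENNReal.ofReal δf * P' (Ev N) :=
          Finset.sum_le_sum_of_subset (by intro x hx; simp at hx ⊢; omega)
      _ = (∑ N ∈ Finset.range (M+1), ENNReal.ofReal δf * P' (Ev (N+1)))
            + ENNReal.ofReal δf * P' (Ev 0) := Finset.sum_range_succ' _ _
      _ = ((∑ N ∈ Finset.range M, ENNReal.ofReal δf * P' (Ev (N+2)))
            + ENNReal.ofReal δf * P' (Ev 1)) + ENNReal.ofReal δf * P' (Ev 0) := by
          rw [Finset.sum_range_succ' (fun N => ENNReal.ofReal δf * P' (Ev (N+1))) M]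
      _ = ∑ N ∈ Finset.range M, ENNReal.ofReal δf * P' (Ev (N+2)) := by
          simp [h0, h1]
      _ ≤ ENNReal.ofReal (f θ1) := hsum M
  -- conclusion
  have hunion : {ω | ∃ N, 1 ≤ N ∧ δf ≤ f (θ N ω) ∧
      ∀ n, 1 ≤ n → n < N → f (θ n ω) < δf ∧ cst < f (θ n ω)} = ⋃ N, Ev N := by
    ext ω; simp [hEv]
  rw [hunion]
  have hle : ENNReal.ofReal δf * P' (⋃ N, Ev N) ≤ ENNReal.ofReal (f θ1) := by
    calc ENNReal.ofReal δf * P' (⋃ N, Ev N)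
        ≤ ENNReal.ofReal δf * ∑' N, P' (Ev N) := by
          gcongr
          exact measure_iUnion_le _
      _ = ∑' N, ENNReal.ofReal δf * P' (Ev N) := ENNReal.tsum_mul_left.symm
      _ ≤ ENNReal.ofReal (f θ1) := htsum
  have hδf' : ENNReal.ofReal δf ≠ 0 := by
    simp [ENNReal.ofReal_eq_zero]; linarith
  have hδf'' : ENNReal.ofReal δf ≠ ⊤ := ENNReal.ofReal_ne_top
  rw [ENNReal.ofReal_div_of_pos hδf]
  rw [ENNReal.le_div_iff_mul_le (Or.inl hδf') (Or.inl hδf'')]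
  rw [mul_comm]
  exact hle
end

section
/- Let d ≥ 1, let f : ℝ^d → ℝ be L-smooth with f ≥ 0, fix θ ∈ ℝ^d, and let G : Ω → ℝ^d be a random vector on a probability space (Ω, 𝔉, P) such that E[G] = ∇f(θ) and E[|G_i − ∂_i f(θ)|²] ≤ σ² for every coordinate 1 ≤ i ≤ d, where σ > 0. Assume the PL inequality ‖∇f(θ)‖₂² ≥ 2μ f(θ) holds at θ for some μ > 0, that 0 < a ≤ 1/L, and that f(θ) > L a σ² d / μ. Then E[ f(θ − a G) ] ≤ (1 − μ a / 2) f(θ). -/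
open MeasureTheory

local notation "⟪" x ", " y "⟫" => @inner ℝ _ _ x y

/-- Descent lemma: quadratic upper bound for functions with Lipschitz gradient. -/
lemma descent_lemma {d : ℕ} (f : EuclideanSpace ℝ (Fin d) → ℝ)
    (hf : Differentiable ℝ f) (L : ℝ) (hL : 0 ≤ L)
    (hsmooth : ∀ x y : EuclideanSpace ℝ (Fin d),
      ‖gradient f x - gradient f y‖ ≤ L * ‖x - y‖)
    (x y : EuclideanSpace ℝ (Fin d)) :
    f y ≤ f x + ⟪gradient f x, y - x⟫ + L / 2 * ‖y - x‖ ^ 2 := by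
  set v := y - x with hv
  have hgc : Continuous (gradient f) := by
    have : LipschitzWith (Real.toNNReal L) (gradient f) :=
      LipschitzWith.of_dist_le_mul (fun a b => by
        simpa [dist_eq_norm, Real.coe_toNNReal L hL] using hsmooth a b)
    exact this.continuous
  have hline : ∀ t : ℝ, HasDerivAt (fun t : ℝ => x + t • v) v t := by
    intro t
    simpa using ((hasDerivAt_id t).smul_const v).const_add x
  have hderiv : ∀ t : ℝ, HasDerivAt (fun t : ℝ => f (x + t • v))
      ⟪gradient f (x + t • v), v⟫ t := by
    intro t
    have h1 := (hf (x + t • v)).hasGradientAt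
    have h2 := h1.hasFDerivAt.comp_hasDerivAt t (hline t)
    exact h2
  have hcont : Continuous (fun t : ℝ => ⟪gradient f (x + t • v), v⟫) := by
    exact (hgc.comp (by continuity)).inner continuous_const
  have hint : IntervalIntegrable (fun t : ℝ => ⟪gradient f (x + t • v), v⟫)
      MeasureTheory.volume 0 1 := hcont.intervalIntegrable 0 1
  have hFTC : f y - f x = ∫ t in (0:ℝ)..1, ⟪gradient f (x + t • v), v⟫ := by
    have h := intervalIntegral.integral_eq_sub_of_hasDerivAt
      (fun t _ => hderiv t) hint
    have e1 : (x + (1:ℝ) • v) = y := by simp [hv]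
    have e0 : (x + (0:ℝ) • v) = x := by simp
    rw [e1, e0] at h
    exact h.symm
  have hbound : ∀ t ∈ Set.Icc (0:ℝ) 1,
      ⟪gradient f (x + t • v), v⟫ ≤ ⟪gradient f x, v⟫ + L * t * ‖v‖ ^ 2 := by
    intro t ht
    have h1 : ⟪gradient f (x + t • v) - gradient f x, v⟫ ≤
        ‖gradient f (x + t • v) - gradient f x‖ * ‖v‖ :=
      real_inner_le_norm _ _
    have h2 : ‖gradient f (x + t • v) - gradient f x‖ ≤ L * (t * ‖v‖) := by
      have := hsmooth (x + t • v) x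
      simpa [norm_smul, abs_of_nonneg ht.1, mul_assoc] using this
    have h3 : ⟪gradient f (x + t • v) - gradient f x, v⟫ ≤ L * t * ‖v‖ ^ 2 := by
      calc ⟪gradient f (x + t • v) - gradient f x, v⟫ ≤ _ := h1
        _ ≤ L * (t * ‖v‖) * ‖v‖ := by
            apply mul_le_mul_of_nonneg_right h2 (norm_nonneg _)
        _ = L * t * ‖v‖ ^ 2 := by ring
    have := inner_sub_left (𝕜 := ℝ) (gradient f (x + t • v)) (gradient f x) v
    linarith [this ▸ h3]
  have hintineq : (∫ t in (0:ℝ)..1, ⟪gradient f (x + t • v), v⟫) ≤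
      ∫ t in (0:ℝ)..1, (⟪gradient f x, v⟫ + L * t * ‖v‖ ^ 2) := by
    apply intervalIntegral.integral_mono_on (by norm_num) hint
    · exact (continuous_const.add ((continuous_const.mul continuous_id).mul
        continuous_const)).intervalIntegrable 0 1
    · exact hbound
  have hrhs : (∫ t in (0:ℝ)..1, (⟪gradient f x, v⟫ + L * t * ‖v‖ ^ 2)) =
      ⟪gradient f x, v⟫ + L / 2 * ‖v‖ ^ 2 := by
    have h : ∀ t : ℝ, ⟪gradient f x, v⟫ + L * t * ‖v‖ ^ 2
        = ⟪gradient f x, v⟫ + (L * ‖v‖ ^ 2) * t := fun t => by ring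
    simp_rw [h]
    rw [intervalIntegral.integral_add intervalIntegrable_const
      (show IntervalIntegrable (fun t : ℝ => L * ‖v‖ ^ 2 * t) MeasureTheory.volume 0 1 by
        exact (continuous_const.mul continuous_id').intervalIntegrable 0 1),
      intervalIntegral.integral_const_mul, integral_id]
    simp
    ring
  rw [hrhs] at hintineq
  linarith [hFTC ▸ hintineq]

/-- one-step contraction for noisy gradient descent under PL.
If `f : ℝ^d → ℝ` is `L`-smooth and nonnegative, `G` has mean `∇f(θ)` and componentwise
noise second moment at most `σ²`, the PL inequality `‖∇f(θ)‖² ≥ 2μ f(θ)` holds at `θ`,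
`0 < a ≤ 1/L`, and `f(θ) > L a σ² d / μ`, then `E[f(θ - a G)] ≤ (1 - μ a / 2) f(θ)`. -/
theorem stmt7
    (d : ℕ) (hd : 1 ≤ d)
    (f : EuclideanSpace ℝ (Fin d) → ℝ) (hf : Differentiable ℝ f)
    (hfnonneg : ∀ x, 0 ≤ f x)
    (L : ℝ) (hL : 0 < L)
    (hsmooth : ∀ x y : EuclideanSpace ℝ (Fin d),
      ‖gradient f x - gradient f y‖ ≤ L * ‖x - y‖)
    (θ : EuclideanSpace ℝ (Fin d))
    (Ω : Type*) [MeasurableSpace Ω] (P : Measure Ω) [IsProbabilityMeasure P]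
    (G : Ω → EuclideanSpace ℝ (Fin d)) (hGmeas : Measurable G) (hGint : Integrable G P)
    (σ : ℝ) (hσ : 0 < σ)
    (hmean : ∫ ω, G ω ∂P = gradient f θ)
    (hvarint : ∀ i : Fin d, Integrable (fun ω => |G ω i - gradient f θ i| ^ 2) P)
    (hvar : ∀ i : Fin d, ∫ ω, |G ω i - gradient f θ i| ^ 2 ∂P ≤ σ ^ 2)
    (μ : ℝ) (hμ : 0 < μ)
    (hPL : 2 * μ * f θ ≤ ‖gradient f θ‖ ^ 2)
    (a : ℝ) (ha : 0 < a) (haL : a ≤ 1 / L)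
    (hbig : L * a * σ ^ 2 * d / μ < f θ) :
    ∫ ω, f (θ - a • G ω) ∂P ≤ (1 - μ * a / 2) * f θ := by
  set v := gradient f θ with hv
  -- pointwise descent bound
  have hpt : ∀ ω, f (θ - a • G ω) ≤ f θ - a * ⟪v, G ω⟫ + L * a ^ 2 / 2 * ‖G ω‖ ^ 2 := by
    intro ω
    have h := descent_lemma f hf L hL.le hsmooth θ (θ - a • G ω)
    have e1 : (θ - a • G ω) - θ = -(a • G ω) := by abel
    rw [e1] at h
    have e2 : ⟪v, -(a • G ω)⟫ = -(a * ⟪v, G ω⟫) := by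
      rw [inner_neg_right, real_inner_smul_right]
    have e3 : ‖-(a • G ω)‖ ^ 2 = a ^ 2 * ‖G ω‖ ^ 2 := by
      rw [norm_neg, norm_smul, mul_pow, Real.norm_eq_abs, sq_abs]
    rw [e2, e3] at h
    linarith
  -- integrabilities
  have hinner : Integrable (fun ω => ⟪v, G ω⟫) P :=
    (innerSL ℝ v).integrable_comp hGint
  have hcomp : ∀ i : Fin d, Integrable (fun ω => G ω i) P := fun i =>
    (EuclideanSpace.proj i : EuclideanSpace ℝ (Fin d) →L[ℝ] ℝ).integrable_comp hGint
  have hsq : ∀ i : Fin d, Integrable (fun ω => (G ω i) ^ 2) P := by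
    intro i
    have h1 : Integrable (fun ω => (G ω i - v i) ^ 2) P := by
      simpa [sq_abs] using hvarint i
    have e : (fun ω => (G ω i) ^ 2)
        = fun ω => (G ω i - v i) ^ 2 + (2 * v i * G ω i - v i ^ 2) :=
      funext fun ω => by ring
    rw [e]
    exact h1.add (((hcomp i).const_mul _).sub (integrable_const _))
  have hnormsq_eq : ∀ x : EuclideanSpace ℝ (Fin d), ‖x‖ ^ 2 = ∑ i, (x i) ^ 2 := by
    intro x
    rw [EuclideanSpace.norm_sq_eq]
    simp [Real.norm_eq_abs, sq_abs]
  have hnormint : Integrable (fun ω => ‖G ω‖ ^ 2) P := by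
    have e : (fun ω => ‖G ω‖ ^ 2) = fun ω => ∑ i, (G ω i) ^ 2 :=
      funext fun ω => hnormsq_eq _
    rw [e]
    exact integrable_finset_sum _ (fun i _ => hsq i)
  have hgint : Integrable
      (fun ω => f θ - a * ⟪v, G ω⟫ + L * a ^ 2 / 2 * ‖G ω‖ ^ 2) P :=
    ((integrable_const _).sub (hinner.const_mul a)).add (hnormint.const_mul _)
  have hfint : Integrable (fun ω => f (θ - a • G ω)) P := by
    apply Integrable.mono' hgint
    · exact (hf.continuous.comp_aestronglyMeasurable
        ((measurable_const.sub (hGmeas.const_smul a)).aestronglyMeasurable))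
    · filter_upwards with ω
      rw [Real.norm_eq_abs, abs_of_nonneg (hfnonneg _)]
      exact hpt ω
  have hmono : ∫ ω, f (θ - a • G ω) ∂P
      ≤ ∫ ω, (f θ - a * ⟪v, G ω⟫ + L * a ^ 2 / 2 * ‖G ω‖ ^ 2) ∂P :=
    integral_mono hfint hgint hpt
  -- compute integral of the bound
  have hintinner : ∫ ω, ⟪v, G ω⟫ ∂P = ‖v‖ ^ 2 := by
    rw [integral_inner hGint, hmean, real_inner_self_eq_norm_sq]
  have hsplit : ∫ ω, (f θ - a * ⟪v, G ω⟫ + L * a ^ 2 / 2 * ‖G ω‖ ^ 2) ∂P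
      = f θ - a * ‖v‖ ^ 2 + L * a ^ 2 / 2 * ∫ ω, ‖G ω‖ ^ 2 ∂P := by
    have h1 : ∫ ω, (f θ - a * ⟪v, G ω⟫ + L * a ^ 2 / 2 * ‖G ω‖ ^ 2) ∂P
        = (∫ ω, (f θ - a * ⟪v, G ω⟫) ∂P) + ∫ ω, L * a ^ 2 / 2 * ‖G ω‖ ^ 2 ∂P :=
      integral_add ((integrable_const _).sub (hinner.const_mul a)) (hnormint.const_mul _)
    have h2 : ∫ ω, (f θ - a * ⟪v, G ω⟫) ∂P
        = (∫ _ω, f θ ∂P) - ∫ ω, a * ⟪v, G ω⟫ ∂P :=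
      integral_sub (integrable_const _) (hinner.const_mul a)
    rw [h1, h2, integral_const, integral_const_mul _, integral_const_mul _, hintinner]
    simp
  -- second moment bound
  have hcompmean : ∀ i : Fin d, ∫ ω, G ω i ∂P = v i := by
    intro i
    have h := (EuclideanSpace.proj i :
      EuclideanSpace ℝ (Fin d) →L[ℝ] ℝ).integral_comp_comm hGint
    simpa [hmean] using h
  have hi : ∀ i : Fin d, ∫ ω, (G ω i) ^ 2 ∂P ≤ σ ^ 2 + (v i) ^ 2 := by
    intro i
    have e : (fun ω => (G ω i) ^ 2)
        = fun ω => |G ω i - v i| ^ 2 + (2 * v i * G ω i - v i ^ 2) :=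
      funext fun ω => by rw [sq_abs]; ring
    have h1 : ∫ ω, (|G ω i - v i| ^ 2 + (2 * v i * G ω i - v i ^ 2)) ∂P
        = (∫ ω, |G ω i - v i| ^ 2 ∂P) + ∫ ω, (2 * v i * G ω i - v i ^ 2) ∂P :=
      integral_add (hvarint i) (((hcomp i).const_mul _).sub (integrable_const _))
    have h2 : ∫ ω, (2 * v i * G ω i - v i ^ 2) ∂P
        = (∫ ω, 2 * v i * G ω i ∂P) - ∫ _ω, v i ^ 2 ∂P :=
      integral_sub ((hcomp i).const_mul _) (integrable_const _)
    rw [e, h1, h2, integral_const_mul _, hcompmean i, integral_const]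
    have := hvar i
    simp only [measure_univ, probReal_univ, ENNReal.toReal_one, smul_eq_mul, one_mul]
    nlinarith
  have hGsq : ∫ ω, ‖G ω‖ ^ 2 ∂P ≤ σ ^ 2 * d + ‖v‖ ^ 2 := by
    have e : (fun ω => ‖G ω‖ ^ 2) = fun ω => ∑ i, (G ω i) ^ 2 :=
      funext fun ω => hnormsq_eq _
    rw [e, integral_finset_sum _ (fun i _ => hsq i)]
    calc (∑ i, ∫ ω, (G ω i) ^ 2 ∂P) ≤ ∑ i : Fin d, (σ ^ 2 + (v i) ^ 2) :=
          Finset.sum_le_sum (fun i _ => hi i)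
      _ = σ ^ 2 * d + ‖v‖ ^ 2 := by
          rw [Finset.sum_add_distrib, Finset.sum_const, ← hnormsq_eq v]
          simp [mul_comm]
  -- final arithmetic
  have hbig' : L * a * σ ^ 2 * d < μ * f θ := by
    have := (div_lt_iff₀ hμ).mp hbig
    linarith
  have haL' : a * L ≤ 1 := (le_div_iff₀ hL).mp haL
  have hvnn : (0:ℝ) ≤ ‖v‖ ^ 2 := sq_nonneg _
  have hstep : f θ - a * ‖v‖ ^ 2 + L * a ^ 2 / 2 * (σ ^ 2 * d + ‖v‖ ^ 2)
      ≤ (1 - μ * a / 2) * f θ := by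
    nlinarith [mul_nonneg ha.le hvnn, mul_nonneg ha.le (sub_nonneg.mpr haL'),
      mul_le_mul_of_nonneg_left hPL (by positivity : (0:ℝ) ≤ a / 2),
      mul_le_mul_of_nonneg_left hbig'.le (by positivity : (0:ℝ) ≤ a / 2),
      mul_nonneg (mul_nonneg ha.le ha.le) hvnn]
  have hc : (0:ℝ) ≤ L * a ^ 2 / 2 := by positivity
  calc ∫ ω, f (θ - a • G ω) ∂P
      ≤ f θ - a * ‖v‖ ^ 2 + L * a ^ 2 / 2 * ∫ ω, ‖G ω‖ ^ 2 ∂P := by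
        rw [← hsplit]; exact hmono
    _ ≤ f θ - a * ‖v‖ ^ 2 + L * a ^ 2 / 2 * (σ ^ 2 * d + ‖v‖ ^ 2) := by
        have := mul_le_mul_of_nonneg_left hGsq hc
        linarith
    _ ≤ (1 - μ * a / 2) * f θ := hstep
end

section
/- Let d ≥ 1, let f : ℝ^d → ℝ be differentiable and L_i-smooth with respect to each coordinate i, with L_max = max_i L_i and L_avg = (1/d)Σ_i L_i. Fix θ ∈ ℝ^d and let G : Ω → ℝ^d be a random vector on a probability space (Ω, 𝔉, P) such that E[G_i] = ∂_i f(θ) and E[|G_i − ∂_i f(θ)|²] ≤ σ² for every coordinate 1 ≤ i ≤ d, where σ > 0. Then for every a > 0, (1/d) Σ_{i=1}^d E[ f(θ − a G_i e_i) ] ≤ f(θ) − (a/d) ‖∇f(θ)‖₂² + (L_max a²/(2d)) ‖∇f(θ)‖₂² + (L_avg a² σ²)/2, where e_i is the i-th standard basis vector. -/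
open MeasureTheory

-- quadratic bound from Lipschitz derivative
theorem aux_descent (g g' : ℝ → ℝ) (hg : ∀ s, HasDerivAt g (g' s) s)
    (L : ℝ) (hL0 : 0 ≤ L) (hL : ∀ s t, |g' s - g' t| ≤ L * |s - t|) (t : ℝ) :
    |g t - g 0 - t * g' 0| ≤ L * t ^ 2 / 2 := by
  have hlip : LipschitzWith (Real.toNNReal L) g' := by
    apply LipschitzWith.of_dist_le_mul
    intro x y
    simpa [Real.dist_eq, Real.coe_toNNReal L hL0] using hL x y
  have hcont : Continuous g' := hlip.continuous
  have hint : ∀ u v : ℝ, IntervalIntegrable g' MeasureTheory.volume u v :=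
    fun u v => hcont.intervalIntegrable u v
  have h1 : ∫ s in (0:ℝ)..t, g' s = g t - g 0 :=
    intervalIntegral.integral_eq_sub_of_hasDerivAt (fun s _ => hg s) (hint 0 t)
  have h2 : g t - g 0 - t * g' 0 = ∫ s in (0:ℝ)..t, (g' s - g' 0) := by
    rw [intervalIntegral.integral_sub (hint 0 t) (intervalIntegrable_const), h1]
    simp [mul_comm]
  rw [h2]
  have hb : |∫ s in (0:ℝ)..t, (g' s - g' 0)| ≤ |∫ s in (0:ℝ)..t, L * abs s| := by
    have := intervalIntegral.norm_integral_le_abs_of_norm_le (μ := MeasureTheory.volume)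
      (a := (0:ℝ)) (b := t) (f := fun s => g' s - g' 0) (g := fun s => L * abs s)
      (by filter_upwards with s; simpa using hL s 0)
      ((continuous_const.mul continuous_abs).intervalIntegrable 0 t)
    simpa using this
  refine hb.trans_eq ?_
  rcases le_or_gt 0 t with h | h
  · have : ∫ s in (0:ℝ)..t, L * abs s = L * (t ^ 2 / 2) := by
      rw [intervalIntegral.integral_const_mul]
      rw [intervalIntegral.integral_congr (g := fun s => s)]
      · rw [integral_id]; ring_nf
      · intro s hs
        rw [Set.uIcc_of_le h] at hs
        exact abs_of_nonneg hs.1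
    rw [this, abs_of_nonneg (by positivity)]; ring
  · have : ∫ s in (0:ℝ)..t, L * abs s = -(L * (t ^ 2 / 2)) := by
      rw [intervalIntegral.integral_const_mul]
      rw [intervalIntegral.integral_congr (g := fun s => -s)]
      · rw [intervalIntegral.integral_neg, integral_id]; ring_nf
      · intro s hs
        rw [Set.uIcc_of_ge h.le] at hs
        exact abs_of_nonpos hs.2
    rw [this, abs_neg, abs_of_nonneg (by positivity)]; ring

theorem aux_coord (d : ℕ) (f : EuclideanSpace ℝ (Fin d) → ℝ) (hf : Differentiable ℝ f)
    (i : Fin d) (L : ℝ)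
    (hLi : ∀ (θ : EuclideanSpace ℝ (Fin d)) (h : ℝ),
      |gradient f (θ + h • EuclideanSpace.single i (1 : ℝ)) i - gradient f θ i| ≤ L * |h|)
    (θ : EuclideanSpace ℝ (Fin d)) (t : ℝ) :
    |f (θ + t • EuclideanSpace.single i (1 : ℝ)) - f θ - t * gradient f θ i| ≤ L * t ^ 2 / 2 := by
  set e : EuclideanSpace ℝ (Fin d) := EuclideanSpace.single i (1 : ℝ) with he
  have hL0 : 0 ≤ L := le_trans (abs_nonneg _) (by simpa using hLi θ 1)
  set g : ℝ → ℝ := fun s => f (θ + s • e) with hg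
  set g' : ℝ → ℝ := fun s => gradient f (θ + s • e) i with hg'
  have hderiv : ∀ s, HasDerivAt g (g' s) s := by
    intro s
    have hline : HasDerivAt (fun s : ℝ => θ + s • e) e s := by
      simpa using ((hasDerivAt_id s).smul_const e).const_add θ
    have hfd := ((hf (θ + s • e)).hasGradientAt.hasFDerivAt).comp_hasDerivAt s hline
    have : (InnerProductSpace.toDual ℝ (EuclideanSpace ℝ (Fin d))) (gradient f (θ + s • e)) e
        = gradient f (θ + s • e) i := by
      rw [InnerProductSpace.toDual_apply_apply, he, EuclideanSpace.inner_single_right]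
      simp
    rwa [this] at hfd
  have hLip : ∀ s u : ℝ, |g' s - g' u| ≤ L * |s - u| := by
    intro s u
    have hrw : θ + s • e = (θ + u • e) + (s - u) • e := by module
    simpa [hg', hrw] using hLi (θ + u • e) (s - u)
  have h0 : g 0 = f θ := by simp [hg]
  have h0' : g' 0 = gradient f θ i := by simp [hg']
  have := aux_descent g g' hderiv L hL0 hLip t
  rwa [h0, h0'] at this

/-- one-step descent inequality for noisy randomized coordinate descent.
If `f : ℝ^d → ℝ` is differentiable and `Lᵢ`-smooth with respect to each coordinate `i`
(with `Lmax` the maximum and `Lavg` the average of the `Lᵢ`), and `G` is a random vector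
with `E[Gᵢ] = ∂ᵢ f(θ)` and `E[|Gᵢ - ∂ᵢ f(θ)|²] ≤ σ²` for each `i`, then for every `a > 0`,
`(1/d) Σᵢ E[f(θ - a Gᵢ eᵢ)]
  ≤ f(θ) - (a/d)‖∇f(θ)‖² + (Lmax a²/(2d))‖∇f(θ)‖² + Lavg a² σ²/2`. -/
theorem stmt8
    (d : ℕ) (hd : 1 ≤ d)
    (f : EuclideanSpace ℝ (Fin d) → ℝ) (hf : Differentiable ℝ f)
    (Li : Fin d → ℝ)
    (hLi : ∀ (i : Fin d) (θ : EuclideanSpace ℝ (Fin d)) (h : ℝ),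
      |gradient f (θ + h • EuclideanSpace.single i (1 : ℝ)) i - gradient f θ i| ≤ Li i * |h|)
    (Lmax Lavg : ℝ)
    (hLmax : Lmax = Finset.univ.sup' (Finset.univ_nonempty_iff.mpr ⟨⟨0, hd⟩⟩) Li)
    (hLavg : Lavg = (∑ i, Li i) / d)
    (θ : EuclideanSpace ℝ (Fin d))
    (Ω : Type*) [MeasurableSpace Ω] (P : Measure Ω) [IsProbabilityMeasure P]
    (G : Ω → EuclideanSpace ℝ (Fin d)) (hGmeas : Measurable G)
    (σ : ℝ) (hσ : 0 < σ)
    (hmeanint : ∀ i : Fin d, Integrable (fun ω => G ω i) P)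
    (hmean : ∀ i : Fin d, ∫ ω, G ω i ∂P = gradient f θ i)
    (hvarint : ∀ i : Fin d, Integrable (fun ω => |G ω i - gradient f θ i| ^ 2) P)
    (hvar : ∀ i : Fin d, ∫ ω, |G ω i - gradient f θ i| ^ 2 ∂P ≤ σ ^ 2)
    (a : ℝ) (ha : 0 < a) :
    (1 / d) * ∑ i : Fin d, ∫ ω, f (θ - (a * G ω i) • EuclideanSpace.single i (1 : ℝ)) ∂P
      ≤ f θ - a / d * ‖gradient f θ‖ ^ 2
        + Lmax * a ^ 2 / (2 * d) * ‖gradient f θ‖ ^ 2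
        + Lavg * a ^ 2 * σ ^ 2 / 2 := by
  set g : EuclideanSpace ℝ (Fin d) := gradient f θ with hgdef
  have hd0 : (0:ℝ) < d := by exact_mod_cast hd
  have hL0 : ∀ i, 0 ≤ Li i := fun i =>
    le_trans (abs_nonneg _) (by simpa using hLi i θ 1)
  -- squared integrability of G i
  have hGi2 : ∀ i, Integrable (fun ω => (G ω i) ^ 2) P := by
    intro i
    have : (fun ω => (G ω i) ^ 2)
        = fun ω => |G ω i - g i| ^ 2 + (2 * g i) * G ω i - g i ^ 2 := by
      funext ω; rw [sq_abs]; ring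
    rw [this]
    exact (((hvarint i).add ((hmeanint i).const_mul _)).sub (integrable_const _))
  -- second moment bound
  have hGm2 : ∀ i, ∫ ω, (G ω i) ^ 2 ∂P ≤ σ ^ 2 + g i ^ 2 := by
    intro i
    have : (fun ω => (G ω i) ^ 2)
        = fun ω => |G ω i - g i| ^ 2 + (2 * g i) * G ω i - g i ^ 2 := by
      funext ω; rw [sq_abs]; ring
    have hI1 : Integrable (fun ω => |G ω i - g i| ^ 2 + (2 * g i) * G ω i) P := by
      exact (hvarint i).add ((hmeanint i).const_mul _)
    have hI1' : Integrable (fun ω => (2 * g i) * G ω i) P := by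
      exact (hmeanint i).const_mul _
    rw [this, integral_sub hI1 (integrable_const _),
      integral_add (hvarint i) hI1',
      integral_const_mul _ _, hmean i, integral_const]
    have := hvar i
    simp only [measure_univ, ENNReal.toReal_one, probReal_univ, smul_eq_mul, one_mul]
    nlinarith [hvar i]
  -- pointwise descent bound
  have key : ∀ (i : Fin d) (ω : Ω),
      |f (θ - (a * G ω i) • EuclideanSpace.single i (1 : ℝ))
        - (f θ - (a * g i) * G ω i)| ≤ (Li i * a ^ 2 / 2) * (G ω i) ^ 2 := by
    intro i ω
    have h1 := aux_coord d f hf i (Li i) (hLi i) θ (-(a * G ω i))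
    have hrw : θ + (-(a * G ω i)) • EuclideanSpace.single i (1:ℝ)
        = θ - (a * G ω i) • EuclideanSpace.single i (1:ℝ) := by module
    rw [hrw] at h1
    calc |f (θ - (a * G ω i) • EuclideanSpace.single i (1:ℝ)) - (f θ - (a * g i) * G ω i)|
        = |f (θ - (a * G ω i) • EuclideanSpace.single i (1:ℝ)) - f θ - (-(a * G ω i)) * g i| := by
          ring_nf
      _ ≤ Li i * (-(a * G ω i)) ^ 2 / 2 := h1
      _ = (Li i * a ^ 2 / 2) * (G ω i) ^ 2 := by ring
  -- integrability of the objective values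
  have hfXmeas : ∀ i : Fin d,
      AEStronglyMeasurable
        (fun ω => f (θ - (a * G ω i) • EuclideanSpace.single i (1 : ℝ))) P := by
    intro i
    have hGi : Measurable fun ω => G ω i := (EuclideanSpace.proj i).continuous.measurable.comp hGmeas
    have hX : Measurable fun ω => θ - (a * G ω i) • EuclideanSpace.single i (1:ℝ) :=
      measurable_const.sub ((hGi.const_mul a).smul_const _)
    exact (hf.continuous.measurable.comp hX).aestronglyMeasurable
  have hfXint : ∀ i : Fin d,
      Integrable (fun ω => f (θ - (a * G ω i) • EuclideanSpace.single i (1 : ℝ))) P := by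
    intro i
    have hbnd : Integrable
        (fun ω => |f θ - (a * g i) * G ω i| + (Li i * a ^ 2 / 2) * (G ω i) ^ 2) P := by
      exact (((integrable_const (f θ)).sub ((hmeanint i).const_mul (a * g i))).abs).add
        ((hGi2 i).const_mul (Li i * a ^ 2 / 2))
    refine Integrable.mono' hbnd (hfXmeas i) ?_
    filter_upwards with ω
    have h1 := key i ω
    have h2 := abs_sub_abs_le_abs_sub
      (f (θ - (a * G ω i) • EuclideanSpace.single i (1:ℝ))) (f θ - (a * g i) * G ω i)
    rw [Real.norm_eq_abs]
    linarith [abs_nonneg (f θ - (a * g i) * G ω i)]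
  -- per-coordinate expectation bound
  have hEi : ∀ i : Fin d,
      ∫ ω, f (θ - (a * G ω i) • EuclideanSpace.single i (1 : ℝ)) ∂P
        ≤ f θ - a * g i ^ 2 + (Li i * a ^ 2 / 2) * (σ ^ 2 + g i ^ 2) := by
    intro i
    have hub : Integrable
        (fun ω => f θ - (a * g i) * G ω i + (Li i * a ^ 2 / 2) * (G ω i) ^ 2) P :=
      ((integrable_const (f θ)).sub ((hmeanint i).const_mul _)).add
        ((hGi2 i).const_mul _)
    have hle : ∫ ω, f (θ - (a * G ω i) • EuclideanSpace.single i (1 : ℝ)) ∂P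
        ≤ ∫ ω, (f θ - (a * g i) * G ω i + (Li i * a ^ 2 / 2) * (G ω i) ^ 2) ∂P := by
      refine integral_mono (hfXint i) hub ?_
      intro ω
      have := key i ω
      have := abs_le.mp this
      linarith [this.2]
    refine hle.trans ?_
    have hI2 : Integrable (fun ω => f θ - (a * g i) * G ω i) P := by
      exact (integrable_const _).sub ((hmeanint i).const_mul _)
    have hI3 : Integrable (fun ω => (a * g i) * G ω i) P := by
      exact (hmeanint i).const_mul _
    have hI4 : Integrable (fun ω => (Li i * a ^ 2 / 2) * (G ω i) ^ 2) P := by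
      exact (hGi2 i).const_mul _
    rw [integral_add hI2 hI4,
      integral_sub (integrable_const (f θ)) hI3,
      integral_const_mul _ _, integral_const_mul _ _, hmean i, integral_const]
    simp only [measure_univ, ENNReal.toReal_one, probReal_univ, smul_eq_mul, one_mul]
    have h2 := hGm2 i
    have hc : 0 ≤ Li i * a ^ 2 / 2 := by have := hL0 i; positivity
    nlinarith [mul_le_mul_of_nonneg_left h2 hc]
  -- norm squared
  have hnorm : ‖g‖ ^ 2 = ∑ i, g i ^ 2 := by
    rw [← real_inner_self_eq_norm_sq]
    simp only [PiLp.inner_apply, RCLike.inner_apply, conj_trivial, sq]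
  -- Lmax bound
  have hLmax' : ∀ i : Fin d, Li i ≤ Lmax := by
    intro i; rw [hLmax]; exact Finset.le_sup' Li (Finset.mem_univ i)
  have hsum : ∑ i, Li i = d * Lavg := by
    rw [hLavg]; field_simp
  -- combine
  have hstep : (1 / (d:ℝ)) *
      ∑ i : Fin d, ∫ ω, f (θ - (a * G ω i) • EuclideanSpace.single i (1 : ℝ)) ∂P
      ≤ (1 / (d:ℝ)) * ∑ i : Fin d,
        (f θ - a * g i ^ 2 + (Li i * a ^ 2 / 2) * (σ ^ 2 + g i ^ 2)) := by
    apply mul_le_mul_of_nonneg_left (Finset.sum_le_sum fun i _ => hEi i) (by positivity)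
  refine hstep.trans ?_
  have hsum2 : ∑ i : Fin d, (f θ - a * g i ^ 2 + (Li i * a ^ 2 / 2) * (σ ^ 2 + g i ^ 2))
      ≤ d * f θ - a * ‖g‖ ^ 2 + (a ^ 2 / 2) * (Lmax * ‖g‖ ^ 2 + d * Lavg * σ ^ 2) := by
    rw [hnorm]
    rw [Finset.sum_add_distrib, Finset.sum_sub_distrib]
    simp only [Finset.sum_const, Finset.card_univ, Fintype.card_fin, nsmul_eq_mul]
    rw [← Finset.mul_sum]
    have h1 : ∑ i : Fin d, (Li i * a ^ 2 / 2) * (σ ^ 2 + g i ^ 2)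
        ≤ ∑ i : Fin d, ((a^2/2) * σ^2 * Li i + (a^2/2) * (Lmax * g i ^ 2)) := by
      refine Finset.sum_le_sum fun i _ => ?_
      have := mul_le_mul_of_nonneg_right (hLmax' i) (sq_nonneg (g i))
      nlinarith [sq_nonneg a, hL0 i, sq_nonneg (g i)]
    rw [Finset.sum_add_distrib, ← Finset.mul_sum, ← Finset.mul_sum] at h1
    have h2 : ∑ i : Fin d, Lmax * g i ^ 2 = Lmax * ∑ i : Fin d, g i ^ 2 :=
      (Finset.mul_sum _ _ _).symm
    rw [hsum, h2] at h1
    nlinarith [h1]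
  calc (1 / (d:ℝ)) * ∑ i : Fin d,
        (f θ - a * g i ^ 2 + (Li i * a ^ 2 / 2) * (σ ^ 2 + g i ^ 2))
      ≤ (1 / (d:ℝ)) * (d * f θ - a * ‖g‖ ^ 2 + (a ^ 2 / 2) * (Lmax * ‖g‖ ^ 2 + d * Lavg * σ ^ 2)) :=
        mul_le_mul_of_nonneg_left hsum2 (by positivity)
    _ = f θ - a / d * ‖g‖ ^ 2 + Lmax * a ^ 2 / (2 * d) * ‖g‖ ^ 2 + Lavg * a ^ 2 * σ ^ 2 / 2 := by
        field_simp
        ring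
end

section
/- Let d ≥ 1, let f : ℝ^d → ℝ be differentiable with f ≥ 0 and L_i-smooth with respect to each coordinate i, with L_max = max_i L_i and L_avg = (1/d)Σ_i L_i. Fix θ ∈ ℝ^d and let G : Ω → ℝ^d be a random vector on a probability space (Ω, 𝔉, P) such that E[G_i] = ∂_i f(θ) and E[|G_i − ∂_i f(θ)|²] ≤ σ² for every coordinate 1 ≤ i ≤ d, where σ > 0. Assume the PL inequality ‖∇f(θ)‖₂² ≥ 2μ f(θ) holds at θ for some μ > 0, that 0 < a ≤ 1/L_max, and that f(θ) > L_avg a σ² d / μ. Then (1/d) Σ_{i=1}^d E[ f(θ − a G_i e_i) ] ≤ (1 − μ a /(2d)) f(θ). -/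
open MeasureTheory intervalIntegral


lemma descent1d (g g' : ℝ → ℝ) (L : ℝ)
    (hg : ∀ t, HasDerivAt g (g' t) t)
    (hlip : ∀ s t : ℝ, |g' t - g' s| ≤ L * |t - s|) (h : ℝ) :
    g h ≤ g 0 + h * g' 0 + L * h ^ 2 / 2 := by
  have hL : 0 ≤ L := by
    have := hlip 0 1
    simp at this
    nlinarith [abs_nonneg (g' 1 - g' 0)]
  have hcont : Continuous g' := by
    have : LipschitzWith (Real.toNNReal L) g' := by
      intro s t
      simp only [edist_dist, Real.dist_eq]
      rw [← ENNReal.ofReal_coe_nnreal, ← ENNReal.ofReal_mul (by positivity)]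
      exact ENNReal.ofReal_le_ofReal <| (hlip t s).trans
        (mul_le_mul_of_nonneg_right (Real.le_coe_toNNReal L) (abs_nonneg _))
    exact this.continuous
  have hii : ∀ u v : ℝ, IntervalIntegrable g' volume u v :=
    fun u v => hcont.intervalIntegrable u v
  have hftc : ∫ t in (0:ℝ)..h, g' t = g h - g 0 :=
    integral_eq_sub_of_hasDerivAt (fun t _ => hg t) (hii 0 h)
  have hsplit : g h - g 0 - h * g' 0 = ∫ t in (0:ℝ)..h, (g' t - g' 0) := by
    rw [intervalIntegral.integral_sub (hii 0 h) intervalIntegrable_const, hftc]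
    simp
  have key : g h - g 0 - h * g' 0 ≤ L * h ^ 2 / 2 := by
    rw [hsplit]
    rcases le_or_gt 0 h with hh | hh
    · calc ∫ t in (0:ℝ)..h, (g' t - g' 0)
          ≤ ∫ t in (0:ℝ)..h, L * t := by
            apply intervalIntegral.integral_mono_on hh
              ((hii 0 h).sub intervalIntegrable_const)
              (Continuous.intervalIntegrable (by continuity) 0 h)
            intro t ht
            have := hlip 0 t
            simp only [sub_zero] at this
            have h2 := (abs_le.mp ((this.trans_eq (by rw [abs_of_nonneg ht.1])))).2
            linarith [le_abs_self (g' t - g' 0), this, abs_of_nonneg ht.1]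
        _ = L * h ^ 2 / 2 := by
            rw [intervalIntegral.integral_const_mul, integral_id]; ring
    · rw [intervalIntegral.integral_symm]
      have hlow : ∫ t in h..(0:ℝ), (L * t) ≤ ∫ t in h..(0:ℝ), (g' t - g' 0) := by
        apply intervalIntegral.integral_mono_on hh.le
          (Continuous.intervalIntegrable (by continuity) h 0)
          ((hii h 0).sub intervalIntegrable_const)
        intro t ht
        have := hlip 0 t
        simp only [sub_zero] at this
        have habs : |t| = -t := abs_of_nonpos ht.2
        have h2 := (abs_le.mp this).1
        nlinarith [neg_abs_le (g' t - g' 0)]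
      have : ∫ t in h..(0:ℝ), (L * t) = - (L * h ^ 2 / 2) := by
        rw [intervalIntegral.integral_const_mul, integral_id]; ring
      linarith
  linarith
open MeasureTheory

lemma coord_descent (d : ℕ) (f : EuclideanSpace ℝ (Fin d) → ℝ) (hf : Differentiable ℝ f)
    (i : Fin d) (L : ℝ)
    (hLi : ∀ (θ : EuclideanSpace ℝ (Fin d)) (h : ℝ),
      |gradient f (θ + h • EuclideanSpace.single i (1 : ℝ)) i - gradient f θ i| ≤ L * |h|)
    (x : EuclideanSpace ℝ (Fin d)) (h : ℝ) :
    f (x + h • EuclideanSpace.single i (1 : ℝ))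
      ≤ f x + h * gradient f x i + L * h ^ 2 / 2 := by
  set e : EuclideanSpace ℝ (Fin d) := EuclideanSpace.single i (1 : ℝ) with he
  have hfd : ∀ y : EuclideanSpace ℝ (Fin d), fderiv ℝ f y e = gradient f y i := by
    intro y
    have : fderiv ℝ f y e = (InnerProductSpace.toDual ℝ _) (gradient f y) e := by
      rw [gradient]; simp
    rw [this, InnerProductSpace.toDual_apply_apply, he, EuclideanSpace.inner_single_right]
    simp
  have hg : ∀ t : ℝ, HasDerivAt (fun t : ℝ => f (x + t • e))
      (gradient f (x + t • e) i) t := by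
    intro t
    have h1 : HasDerivAt (fun t : ℝ => x + t • e) e t := by
      simpa using ((hasDerivAt_id t).smul_const e).const_add x
    have := (hf (x + t • e)).hasFDerivAt.comp_hasDerivAt t h1
    rw [hfd] at this
    exact this
  have hlip : ∀ s t : ℝ, |gradient f (x + t • e) i - gradient f (x + s • e) i|
      ≤ L * |t - s| := by
    intro s t
    have := hLi (x + s • e) (t - s)
    have heq : x + s • e + (t - s) • e = x + t • e := by module
    rwa [heq] at this
  have := descent1d (fun t : ℝ => f (x + t • e)) (fun t => gradient f (x + t • e) i)
    L hg hlip h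
  simpa using this

set_option maxHeartbeats 1000000 in
/-- one-step contraction for noisy randomized coordinate descent under PL.
If `f : ℝ^d → ℝ` is differentiable, nonnegative and `Lᵢ`-smooth with respect to each
coordinate (with `Lmax` the maximum and `Lavg` the average of the `Lᵢ`), `G` has
componentwise mean `∂ᵢ f(θ)` and noise second moment at most `σ²`, the PL inequality
`‖∇f(θ)‖² ≥ 2μ f(θ)` holds at `θ`, `0 < a ≤ 1/Lmax`, and `f(θ) > Lavg a σ² d / μ`,
then `(1/d) Σᵢ E[f(θ - a Gᵢ eᵢ)] ≤ (1 - μ a /(2d)) f(θ)`. -/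
theorem stmt9
    (d : ℕ) (hd : 1 ≤ d)
    (f : EuclideanSpace ℝ (Fin d) → ℝ) (hf : Differentiable ℝ f)
    (hfnonneg : ∀ x, 0 ≤ f x)
    (Li : Fin d → ℝ)
    (hLi : ∀ (i : Fin d) (θ : EuclideanSpace ℝ (Fin d)) (h : ℝ),
      |gradient f (θ + h • EuclideanSpace.single i (1 : ℝ)) i - gradient f θ i| ≤ Li i * |h|)
    (Lmax Lavg : ℝ)
    (hLmax : Lmax = Finset.univ.sup' (Finset.univ_nonempty_iff.mpr ⟨⟨0, hd⟩⟩) Li)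
    (hLavg : Lavg = (∑ i, Li i) / d)
    (θ : EuclideanSpace ℝ (Fin d))
    (Ω : Type*) [MeasurableSpace Ω] (P : Measure Ω) [IsProbabilityMeasure P]
    (G : Ω → EuclideanSpace ℝ (Fin d)) (hGmeas : Measurable G)
    (σ : ℝ) (hσ : 0 < σ)
    (hmeanint : ∀ i : Fin d, Integrable (fun ω => G ω i) P)
    (hmean : ∀ i : Fin d, ∫ ω, G ω i ∂P = gradient f θ i)
    (hvarint : ∀ i : Fin d, Integrable (fun ω => |G ω i - gradient f θ i| ^ 2) P)
    (hvar : ∀ i : Fin d, ∫ ω, |G ω i - gradient f θ i| ^ 2 ∂P ≤ σ ^ 2)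
    (μ : ℝ) (hμ : 0 < μ)
    (hPL : 2 * μ * f θ ≤ ‖gradient f θ‖ ^ 2)
    (a : ℝ) (ha : 0 < a) (haL : a ≤ 1 / Lmax)
    (hbig : Lavg * a * σ ^ 2 * d / μ < f θ) :
    (1 / d) * ∑ i : Fin d, ∫ ω, f (θ - (a * G ω i) • EuclideanSpace.single i (1 : ℝ)) ∂P
      ≤ (1 - μ * a / (2 * d)) * f θ := by
  classical
  set e : Fin d → EuclideanSpace ℝ (Fin d) := fun i => EuclideanSpace.single i (1 : ℝ) with he
  set m : Fin d → ℝ := fun i => gradient f θ i with hmdef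
  have hm : ∀ i, gradient f θ i = m i := fun i => rfl
  simp only [hm] at hmean hvarint hvar
  have hdR : (0 : ℝ) < d := by
    have : (1 : ℝ) ≤ d := by exact_mod_cast hd
    linarith
  have hd0 : (d : ℝ) ≠ 0 := ne_of_gt hdR
  have hL0 : ∀ i, 0 ≤ Li i := by
    intro i
    have h := hLi i θ 1
    simp only [abs_one, mul_one] at h
    exact (abs_nonneg _).trans h
  have hLmax0 : 0 ≤ Lmax := by
    rw [hLmax]
    exact (hL0 ⟨0, hd⟩).trans (Finset.le_sup' Li (Finset.mem_univ _))
  have hLmaxpos : 0 < Lmax := by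
    rcases hLmax0.lt_or_eq with h | h
    · exact h
    · exfalso; rw [← h, div_zero] at haL; linarith
  have haLi : ∀ i, a * Li i ≤ 1 := by
    intro i
    have h1 : Li i ≤ Lmax := hLmax ▸ Finset.le_sup' Li (Finset.mem_univ i)
    have h2 : a * Lmax ≤ 1 := by
      rw [le_div_iff₀ hLmaxpos] at haL; linarith
    nlinarith [hL0 i, ha.le]
  have hGi : ∀ i, Measurable fun ω => G ω i := fun i => (EuclideanSpace.proj i).continuous.measurable.comp hGmeas
  have hsqint : ∀ i, Integrable (fun ω => (G ω i) ^ 2) P := by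
    intro i
    have h1 : (fun ω => (G ω i) ^ 2)
        = fun ω => |G ω i - m i| ^ 2 + (2 * m i) * G ω i - (m i) ^ 2 := by
      funext ω; rw [sq_abs]; ring
    rw [h1]
    exact ((hvarint i).add ((hmeanint i).const_mul _)).sub (integrable_const _)
  have hsq : ∀ i, ∫ ω, (G ω i) ^ 2 ∂P ≤ (m i) ^ 2 + σ ^ 2 := by
    intro i
    have h1 : (fun ω => (G ω i) ^ 2)
        = fun ω => |G ω i - m i| ^ 2 + (2 * m i) * G ω i - (m i) ^ 2 := by
      funext ω; rw [sq_abs]; ring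
    have I2 : Integrable (fun ω => 2 * m i * G ω i) P := (hmeanint i).const_mul _
    have I1 : Integrable (fun ω => |G ω i - m i| ^ 2 + 2 * m i * G ω i) P :=
      (hvarint i).add I2
    rw [h1, integral_sub I1 (integrable_const _),
      integral_add (hvarint i) I2, MeasureTheory.integral_const_mul, hmean, MeasureTheory.integral_const]
    simp only [measure_univ, ENNReal.toReal_one, smul_eq_mul, one_mul, probReal_univ]
    have := hvar i
    nlinarith
  have key : ∀ i, ∫ ω, f (θ - (a * G ω i) • e i) ∂P
      ≤ f θ - (a / 2) * (m i) ^ 2 + a ^ 2 * σ ^ 2 / 2 * Li i := by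
    intro i
    set B : Ω → ℝ :=
      fun ω => f θ - (a * m i) * G ω i + (Li i * a ^ 2 / 2) * (G ω i) ^ 2 with hB
    have hpt : ∀ ω, f (θ - (a * G ω i) • e i) ≤ B ω := by
      intro ω
      have h1 := coord_descent d f hf i (Li i) (hLi i) θ (-(a * G ω i))
      rw [hm i] at h1
      have heq : θ + (-(a * G ω i)) • e i = θ - (a * G ω i) • e i := by
        rw [neg_smul, ← sub_eq_add_neg]
      rw [heq] at h1
      calc f (θ - (a * G ω i) • e i)
          ≤ f θ + (-(a * G ω i)) * gradient f θ i + Li i * (-(a * G ω i)) ^ 2 / 2 := h1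
        _ = B ω := by simp only [hB]; ring
    have hBint : Integrable B P :=
      ((integrable_const _).sub ((hmeanint i).const_mul _)).add ((hsqint i).const_mul _)
    have hfint : Integrable (fun ω => f (θ - (a * G ω i) • e i)) P := by
      apply Integrable.mono' hBint
      · have hc : Continuous fun t : ℝ => θ - t • e i :=
          continuous_const.sub (continuous_id.smul continuous_const)
        exact (hf.continuous.measurable.comp
          (hc.measurable.comp ((hGi i).const_mul a))).aestronglyMeasurable
      · filter_upwards with ω
        rw [Real.norm_eq_abs, abs_of_nonneg (hfnonneg _)]
        exact hpt ω
    have hint_le : ∫ ω, f (θ - (a * G ω i) • e i) ∂P ≤ ∫ ω, B ω ∂P :=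
      integral_mono hfint hBint hpt
    have hBval : ∫ ω, B ω ∂P
        = f θ - (a * m i) * m i + (Li i * a ^ 2 / 2) * ∫ ω, (G ω i) ^ 2 ∂P := by
      have J0 : Integrable (fun ω => a * m i * G ω i) P := (hmeanint i).const_mul _
      have J1 : Integrable (fun ω => f θ - a * m i * G ω i) P :=
        (integrable_const _).sub J0
      have J2 : Integrable (fun ω => Li i * a ^ 2 / 2 * G ω i ^ 2) P :=
        (hsqint i).const_mul _
      beta_reduce
      rw [integral_add J1 J2, integral_sub (integrable_const _) J0,
        MeasureTheory.integral_const_mul, MeasureTheory.integral_const_mul, hmean, MeasureTheory.integral_const]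
      simp [measure_univ]
    refine hint_le.trans ?_
    rw [hBval]
    have hq := hsq i
    have hcoef : (0 : ℝ) ≤ Li i * a ^ 2 / 2 :=
      div_nonneg (mul_nonneg (hL0 i) (sq_nonneg a)) two_pos.le
    nlinarith [mul_le_mul_of_nonneg_left hq hcoef,
      mul_le_mul_of_nonneg_right (haLi i) (sq_nonneg (m i)), sq_nonneg (m i), ha.le]
  have hnorm : ‖gradient f θ‖ ^ 2 = ∑ i, (m i) ^ 2 := by
    rw [EuclideanSpace.norm_eq, Real.sq_sqrt (by positivity)]
    simp [hm, Real.norm_eq_abs, sq_abs]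
  set S := ∑ i : Fin d, ∫ ω, f (θ - (a * G ω i) • e i) ∂P with hS
  have hsum : S ≤ (d : ℝ) * f θ - (a / 2) * ∑ i, (m i) ^ 2
      + a ^ 2 * σ ^ 2 / 2 * ∑ i, Li i := by
    calc S ≤ ∑ i, (f θ - (a / 2) * (m i) ^ 2 + a ^ 2 * σ ^ 2 / 2 * Li i) :=
          Finset.sum_le_sum fun i _ => key i
      _ = (d : ℝ) * f θ - (a / 2) * ∑ i, (m i) ^ 2 + a ^ 2 * σ ^ 2 / 2 * ∑ i, Li i := by
          rw [Finset.sum_add_distrib, Finset.sum_sub_distrib, Finset.sum_const,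
            Finset.card_univ, ← Finset.mul_sum, ← Finset.mul_sum]
          simp [Fintype.card_fin, nsmul_eq_mul]
  have hLsum : ∑ i, Li i = (d : ℝ) * Lavg := by
    rw [hLavg, mul_div_assoc']
    exact (mul_div_cancel_left₀ _ hd0).symm
  have hPL' : 2 * μ * f θ ≤ ∑ i, (m i) ^ 2 := hnorm ▸ hPL
  have hstep : S ≤ (d : ℝ) * f θ - a * μ * f θ + a ^ 2 * σ ^ 2 / 2 * ((d : ℝ) * Lavg) := by
    rw [← hLsum]
    have h2 : (a / 2) * (2 * μ * f θ) ≤ (a / 2) * ∑ i, (m i) ^ 2 :=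
      mul_le_mul_of_nonneg_left hPL' (by positivity)
    nlinarith
  have hbig' : Lavg * a * σ ^ 2 * d < μ * f θ := by
    rw [div_lt_iff₀ hμ] at hbig; linarith
  rw [one_div, inv_mul_le_iff₀ hdR]
  have hRHS : (d : ℝ) * ((1 - μ * a / (2 * d)) * f θ) = (d : ℝ) * f θ - μ * a * f θ / 2 := by
    field_simp
  rw [hRHS]
  have h3 : a * (Lavg * a * σ ^ 2 * d) ≤ a * (μ * f θ) :=
    mul_le_mul_of_nonneg_left hbig'.le ha.le
  linarith
end
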